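/- Let μ be a concave capacity on a measurable space (Ω,𝓕) that is continuous at ∅ (μ(A_n) → 0 whenever A_n ∈ 𝓕 decrease to ∅). Then: (i) there exists a nonempty set 𝒫 of countably additive probability measures on (Ω,𝓕) such that μ(A) = sup_{P∈𝒫} P(A) for all A ∈ 𝓕, and moreover for every measurable ξ : Ω → ℝ whose Choquet integral ∫_Ω |ξ| dμ is finite, the Choquet integral satisfies ∫_Ω ξ dμ = sup_{P∈𝒫} ∫_Ω ξ dP (the right-hand integrals being ordinary Lebesgue integrals); (ii) μ is continuous. -/

import Mathlib

open MeasureTheory Filter Topology Set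

def IsFinAddProb {Ω : Type*} [MeasurableSpace Ω] (P : Set Ω → ℝ) : Prop :=
  P ∅ = 0 ∧ P Set.univ = 1 ∧
    (∀ A : Set Ω, MeasurableSet A → 0 ≤ P A ∧ P A ≤ 1) ∧
    (∀ A B : Set Ω, MeasurableSet A → MeasurableSet B → Disjoint A B →
      P (A ∪ B) = P A + P B)

def IsCapacity {Ω : Type*} [MeasurableSpace Ω] (μ : Set Ω → ℝ) : Prop :=
  μ ∅ = 0 ∧ μ Set.univ = 1 ∧
    ∀ A B : Set Ω, MeasurableSet A → MeasurableSet B → A ⊆ B → μ A ≤ μ B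

def ContBelow {Ω : Type*} [MeasurableSpace Ω] (μ : Set Ω → ℝ) : Prop :=
  ∀ A : ℕ → Set Ω, (∀ n, MeasurableSet (A n)) → Monotone A →
    Filter.Tendsto (fun n => μ (A n)) Filter.atTop (nhds (μ (⋃ n, A n)))

def ContAbove {Ω : Type*} [MeasurableSpace Ω] (μ : Set Ω → ℝ) : Prop :=
  ∀ A : ℕ → Set Ω, (∀ n, MeasurableSet (A n)) → Antitone A →
    Filter.Tendsto (fun n => μ (A n)) Filter.atTop (nhds (μ (⋂ n, A n)))

def ContAtEmpty {Ω : Type*} [MeasurableSpace Ω] (μ : Set Ω → ℝ) : Prop :=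
  ∀ A : ℕ → Set Ω, (∀ n, MeasurableSet (A n)) → Antitone A → (⋂ n, A n) = ∅ →
    Filter.Tendsto (fun n => μ (A n)) Filter.atTop (nhds 0)

def ContAtUniv {Ω : Type*} [MeasurableSpace Ω] (μ : Set Ω → ℝ) : Prop :=
  ∀ A : ℕ → Set Ω, (∀ n, MeasurableSet (A n)) → Monotone A → (⋃ n, A n) = Set.univ →
    Filter.Tendsto (fun n => μ (A n)) Filter.atTop (nhds 1)

def conjCap {Ω : Type*} (μ : Set Ω → ℝ) (A : Set Ω) : ℝ := 1 - μ Aᶜ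

noncomputable def choquet {Ω : Type*} (μ : Set Ω → ℝ) (ξ : Ω → ℝ) : ℝ :=
  (∫ t in Set.Ioi (0:ℝ), μ {ω | ξ ω ≥ t}) +
    (∫ t in Set.Iio (0:ℝ), (μ {ω | ξ ω ≥ t} - 1))

noncomputable def choquetE {Ω : Type*} (μ : Set Ω → ℝ) (ξ : Ω → EReal) : ℝ :=
  (∫ t in Set.Ioi (0:ℝ), μ {ω | (t : EReal) ≤ ξ ω}) +
    (∫ t in Set.Iio (0:ℝ), (μ {ω | (t : EReal) ≤ ξ ω} - 1))

def UpperProbOf {Ω : Type*} [MeasurableSpace Ω] (𝒮 : Set (Set Ω → ℝ)) (V : Set Ω → ℝ) : Prop :=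
  ∀ A : Set Ω, MeasurableSet A → V A = sSup ((fun P => P A) '' 𝒮)

def LowerProbOf {Ω : Type*} [MeasurableSpace Ω] (𝒮 : Set (Set Ω → ℝ)) (v : Set Ω → ℝ) : Prop :=
  ∀ A : Set Ω, MeasurableSet A → v A = sInf ((fun P => P A) '' 𝒮)

def ErgodicCap {Ω : Type*} [MeasurableSpace Ω] (μ : Set Ω → ℝ) (θ : Ω → Ω) : Prop :=
  ∀ B : Set Ω, MeasurableSet B → θ ⁻¹' B = B →
    (μ B = 0 ∨ μ B = 1) ∧ (μ B = 0 ∨ μ Bᶜ = 0)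

def PreservesCap {Ω : Type*} [MeasurableSpace Ω] (μ : Set Ω → ℝ) (θ : Ω → Ω) : Prop :=
  ∀ A : Set Ω, MeasurableSet A → μ (θ ⁻¹' A) = μ A

def IndepSigmaWrt {Ω : Type*} (μ : Set Ω → ℝ) (m₁ m₂ : MeasurableSpace Ω) : Prop :=
  ∀ A B : Set Ω, MeasurableSet[m₁] A → MeasurableSet[m₂] B → μ (A ∩ B) = μ A * μ B

namespace Stmt3Aux

variable {Ω : Type*} [MeasurableSpace Ω]

/-- union of the first `n` parts -/
def pre (E : ℕ → Set Ω) (n : ℕ) : Set Ω := ⋃ i ∈ Finset.range n, E i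

noncomputable def wt (μ : Set Ω → ℝ) (E : ℕ → Set Ω) (i : ℕ) : ℝ :=
  μ (pre E (i + 1)) - μ (pre E i)

open Classical in
noncomputable def cont (μ : Set Ω → ℝ) (E : ℕ → Set Ω) (m : ℕ) (B : Set Ω) : ℝ :=
  ∑ i ∈ Finset.range m, if E i ⊆ B then wt μ E i else 0

omit [MeasurableSpace Ω] in
lemma pre_zero (E : ℕ → Set Ω) : pre E 0 = ∅ := by simp [pre]

omit [MeasurableSpace Ω] in
lemma pre_succ (E : ℕ → Set Ω) (n : ℕ) : pre E (n + 1) = pre E n ∪ E n := by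
  simp [pre, Finset.range_add_one, Set.biUnion_insert, Set.union_comm]

omit [MeasurableSpace Ω] in
lemma pre_mono (E : ℕ → Set Ω) : Monotone (pre E) := by
  intro a b hab ω hω
  simp only [pre, Set.mem_iUnion, Finset.mem_range, exists_prop] at *
  obtain ⟨i, hi, h⟩ := hω
  exact ⟨i, lt_of_lt_of_le hi hab, h⟩

lemma pre_measurable {E : ℕ → Set Ω} (hE : ∀ i, MeasurableSet (E i)) (n : ℕ) :
    MeasurableSet (pre E n) :=
  MeasurableSet.biUnion (Finset.range n).countable_toSet (fun i _ => hE i)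

omit [MeasurableSpace Ω] in
lemma subset_pre {E : ℕ → Set Ω} {i n : ℕ} (h : i < n) : E i ⊆ pre E n := by
  intro ω hω
  simp only [pre, Set.mem_iUnion, Finset.mem_range, exists_prop]
  exact ⟨i, h, hω⟩

section withCap

variable {μ : Set Ω → ℝ} (hcap : IsCapacity μ)

include hcap

lemma wt_nonneg {E : ℕ → Set Ω} (hE : ∀ i, MeasurableSet (E i)) (i : ℕ) :
    0 ≤ wt μ E i := by
  have := hcap.2.2 (pre E i) (pre E (i + 1)) (pre_measurable hE i)
    (pre_measurable hE (i + 1)) (pre_mono E (Nat.le_succ i))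
  simp only [wt]; linarith

omit hcap in
lemma wt_eq_zero {E : ℕ → Set Ω} {i : ℕ} (h : E i = ∅) : wt μ E i = 0 := by
  simp [wt, pre_succ, h]

lemma sum_wt {E : ℕ → Set Ω} (m : ℕ) :
    ∑ i ∈ Finset.range m, wt μ E i = μ (pre E m) := by
  have h := Finset.sum_range_sub (fun i => μ (pre E i)) m
  simp only [wt]
  rw [h, pre_zero, hcap.1, sub_zero]

lemma cont_nonneg {E : ℕ → Set Ω} (hE : ∀ i, MeasurableSet (E i)) (m : ℕ) (B : Set Ω) :
    0 ≤ cont μ E m B := by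
  apply Finset.sum_nonneg
  intro i _
  split
  · exact wt_nonneg hcap hE i
  · exact le_refl 0

lemma cont_le_sum {E : ℕ → Set Ω} (hE : ∀ i, MeasurableSet (E i)) (m : ℕ) (B : Set Ω) :
    cont μ E m B ≤ μ (pre E m) := by
  rw [← sum_wt hcap m]
  apply Finset.sum_le_sum
  intro i _
  split
  · exact le_refl _
  · exact wt_nonneg hcap hE i

lemma cont_mono {E : ℕ → Set Ω} (hE : ∀ i, MeasurableSet (E i)) (m : ℕ)
    {A B : Set Ω} (hAB : A ⊆ B) : cont μ E m A ≤ cont μ E m B := by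
  apply Finset.sum_le_sum
  intro i _
  by_cases h : E i ⊆ A
  · rw [if_pos h, if_pos (h.trans hAB)]
  · rw [if_neg h]
    split
    · exact wt_nonneg hcap hE i
    · exact le_refl 0

omit hcap in
lemma cont_empty {E : ℕ → Set Ω} (m : ℕ) : cont μ E m (∅ : Set Ω) = 0 := by
  apply Finset.sum_eq_zero
  intro i _
  split
  · exact wt_eq_zero (Set.subset_eq_empty ‹_› rfl)
  · rfl

end withCap

end Stmt3Aux

namespace Stmt3Aux

set_option linter.unusedSectionVars false

variable {Ω : Type*} [MeasurableSpace Ω]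

section withCap

variable {μ : Set Ω → ℝ} (hcap : IsCapacity μ)
  (hconc : ∀ A B : Set Ω, MeasurableSet A → MeasurableSet B →
      μ (A ∪ B) + μ (A ∩ B) ≤ μ A + μ B)

open Classical in
/-- the union of parts among the first `n` that are inside `B` -/
noncomputable def inn (E : ℕ → Set Ω) (B : Set Ω) (n : ℕ) : Set Ω :=
  ⋃ i ∈ (Finset.range n).filter (fun i => E i ⊆ B), E i

omit [MeasurableSpace Ω] in
open Classical in
lemma inn_succ (E : ℕ → Set Ω) (B : Set Ω) (n : ℕ) :
    inn E B (n + 1) = if E n ⊆ B then inn E B n ∪ E n else inn E B n := by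
  simp only [inn, Finset.range_add_one, Finset.filter_insert]
  split
  · rw [Finset.set_biUnion_insert, Set.union_comm]
  · rfl

lemma inn_measurable {E : ℕ → Set Ω} (hE : ∀ i, MeasurableSet (E i)) (B : Set Ω) (n : ℕ) :
    MeasurableSet (inn E B n) :=
  MeasurableSet.biUnion (Finset.countable_toSet _) (fun i _ => hE i)

omit [MeasurableSpace Ω] in
lemma inn_subset_pre (E : ℕ → Set Ω) (B : Set Ω) (n : ℕ) : inn E B n ⊆ pre E n := by
  intro ω hω
  simp only [inn, Set.mem_iUnion, Finset.mem_filter, Finset.mem_range, exists_prop] at hω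
  obtain ⟨i, ⟨hi, _⟩, h⟩ := hω
  exact subset_pre hi h

omit [MeasurableSpace Ω] in
lemma inn_subset (E : ℕ → Set Ω) (B : Set Ω) (n : ℕ) : inn E B n ⊆ B := by
  intro ω hω
  simp only [inn, Set.mem_iUnion, Finset.mem_filter, Finset.mem_range, exists_prop] at hω
  obtain ⟨i, ⟨_, hi⟩, h⟩ := hω
  exact hi h

include hcap hconc in
/-- The greedy/marginal-contribution inequality for submodular capacities. -/
lemma greedy {E : ℕ → Set Ω} (hE : ∀ i, MeasurableSet (E i))
    (hdisj : ∀ i j, i ≠ j → Disjoint (E i) (E j)) (B : Set Ω) :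
    ∀ n, cont μ E n B ≤ μ (inn E B n) := by
  intro n
  induction n with
  | zero => simp [cont, inn, hcap.1]
  | succ n ih =>
    have hEpre : E n ∩ pre E n = ∅ := by
      apply Set.eq_empty_of_subset_empty
      intro ω hω
      obtain ⟨h1, h2⟩ := hω
      simp only [pre, Set.mem_iUnion, Finset.mem_range, exists_prop] at h2
      obtain ⟨i, hi, h⟩ := h2
      exact (hdisj n i (by omega)).ne_of_mem h1 h rfl
    rw [cont, Finset.sum_range_succ, ← cont]
    rw [inn_succ]
    by_cases h : E n ⊆ B
    · rw [if_pos h, if_pos h]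
      have key := hconc (pre E n) (inn E B n ∪ E n) (pre_measurable hE n)
        ((inn_measurable hE B n).union (hE n))
      have h1 : pre E n ∪ (inn E B n ∪ E n) = pre E (n + 1) := by
        rw [pre_succ]
        rw [← Set.union_assoc,
          Set.union_eq_self_of_subset_right (inn_subset_pre E B n), ← pre_succ]
      have h2 : pre E n ∩ (inn E B n ∪ E n) = inn E B n := by
        rw [Set.inter_union_distrib_left]
        rw [Set.inter_eq_self_of_subset_right (inn_subset_pre E B n)]
        rw [Set.inter_comm, hEpre, Set.union_empty]
      rw [h1, h2] at key
      simp only [wt]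
      linarith
    · rw [if_neg h, if_neg h, add_zero]
      exact ih

include hcap hconc in
lemma cont_le {E : ℕ → Set Ω} (hE : ∀ i, MeasurableSet (E i))
    (hdisj : ∀ i j, i ≠ j → Disjoint (E i) (E j)) {B : Set Ω} (hB : MeasurableSet B)
    (m : ℕ) : cont μ E m B ≤ μ B :=
  (greedy hcap hconc hE hdisj B m).trans
    (hcap.2.2 _ _ (inn_measurable hE B m) hB (inn_subset E B m))

include hcap in
/-- the content gives the capacity value on prefix unions -/
lemma cont_prefix {E : ℕ → Set Ω} (hdisj : ∀ i j, i ≠ j → Disjoint (E i) (E j))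
    {n m : ℕ} (hnm : n ≤ m) : cont μ E m (pre E n) = μ (pre E n) := by
  classical
  rw [cont]
  rw [← Finset.sum_range_add_sum_Ico _ hnm]
  have h1 : ∑ i ∈ Finset.range n, (if E i ⊆ pre E n then wt μ E i else 0)
      = ∑ i ∈ Finset.range n, wt μ E i := by
    apply Finset.sum_congr rfl
    intro i hi
    rw [if_pos (subset_pre (Finset.mem_range.mp hi))]
  have h2 : ∑ i ∈ Finset.Ico n m, (if E i ⊆ pre E n then wt μ E i else 0) = 0 := by
    apply Finset.sum_eq_zero
    intro i hi
    obtain ⟨hni, _⟩ := Finset.mem_Ico.mp hi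
    split
    · apply wt_eq_zero
      apply Set.eq_empty_of_subset_empty
      intro ω hω
      have h3 : ω ∈ pre E n := ‹E i ⊆ pre E n› hω
      simp only [pre, Set.mem_iUnion, Finset.mem_range, exists_prop] at h3
      obtain ⟨j, hj, h⟩ := h3
      exact (hdisj i j (by omega)).ne_of_mem hω h rfl
    · rfl
  rw [h1, h2, add_zero, sum_wt hcap]

include hcap in
open Classical in
lemma cont_add {E : ℕ → Set Ω} (hE : ∀ i, MeasurableSet (E i)) (m : ℕ)
    {A B : Set Ω} (hAB : Disjoint A B)
    (hrefA : ∀ i, E i ⊆ A ∨ E i ⊆ Aᶜ) :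
    cont μ E m (A ∪ B) = cont μ E m A + cont μ E m B := by
  rw [cont, cont, cont, ← Finset.sum_add_distrib]
  apply Finset.sum_congr rfl
  intro i _
  by_cases hne : E i = ∅
  · rw [wt_eq_zero hne]
    simp
  · by_cases hA : E i ⊆ A
    · have hnB : ¬ E i ⊆ B := fun h => hne (Set.eq_empty_of_subset_empty
        (fun ω hω => (hAB.ne_of_mem (hA hω) (h hω) rfl).elim))
      rw [if_pos (hA.trans Set.subset_union_left), if_pos hA, if_neg hnB, add_zero]
    · have hAc : E i ⊆ Aᶜ := (hrefA i).resolve_left hA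
      by_cases hB : E i ⊆ B
      · rw [if_pos (hB.trans Set.subset_union_right), if_neg hA, if_pos hB, zero_add]
      · have hnAB : ¬ E i ⊆ A ∪ B := by
          intro h
          apply hB
          intro ω hω
          rcases h hω with h1 | h1
          · exact ((hAc hω) h1).elim
          · exact h1
        rw [if_neg hnAB, if_neg hA, if_neg hB, add_zero]

include hcap in
lemma cont_le_one {E : ℕ → Set Ω} (hE : ∀ i, MeasurableSet (E i)) (m : ℕ) (B : Set Ω) :
    cont μ E m B ≤ 1 := by
  refine (cont_le_sum hcap hE m B).trans ?_
  have := hcap.2.2 (pre E m) Set.univ (pre_measurable hE m) MeasurableSet.univ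
    (Set.subset_univ _)
  rw [hcap.2.1] at this
  exact this

include hcap in
lemma cont_univ {E : ℕ → Set Ω} (hpre : pre E m' = Set.univ) :
    cont μ E m' (Set.univ : Set Ω) = 1 := by
  classical
  rw [cont]
  have h : ∀ i ∈ Finset.range m', (if E i ⊆ (Set.univ : Set Ω) then wt μ E i else 0) = wt μ E i := by
    intro i _
    rw [if_pos (Set.subset_univ _)]
  rw [Finset.sum_congr rfl h, sum_wt hcap, hpre, hcap.2.1]

end withCap

end Stmt3Aux

namespace Stmt3Aux

set_option linter.unusedSectionVars false
set_option linter.unusedVariables false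

variable {Ω : Type*} [MeasurableSpace Ω]

open Classical in
/-- the atom of the finite family `F` determined by the subfamily `T` -/
noncomputable def atom (F T : Finset (Set Ω)) : Set Ω :=
  (⋂ B ∈ T, B) ∩ (⋂ B ∈ F \ T, Bᶜ)

omit [MeasurableSpace Ω] in
open Classical in
lemma mem_atom {F T : Finset (Set Ω)} {ω : Ω} :
    ω ∈ atom F T ↔ (∀ B ∈ T, ω ∈ B) ∧ (∀ B ∈ F, B ∉ T → ω ∉ B) := by
  simp only [atom, Set.mem_inter_iff, Set.mem_iInter, Set.mem_compl_iff, Finset.mem_sdiff]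
  constructor
  · rintro ⟨h1, h2⟩
    exact ⟨h1, fun B hB hBT => h2 B ⟨hB, hBT⟩⟩
  · rintro ⟨h1, h2⟩
    exact ⟨h1, fun B hB => h2 B hB.1 hB.2⟩

open Classical in
lemma atom_measurable {F : Finset (Set Ω)} (hF : ∀ B ∈ F, MeasurableSet B)
    {T : Finset (Set Ω)} (hT : T ⊆ F) : MeasurableSet (atom F T) := by
  apply MeasurableSet.inter
  · exact MeasurableSet.biInter (Finset.countable_toSet _) (fun B hB => hF B (hT hB))
  · exact MeasurableSet.biInter (Finset.countable_toSet _)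
      (fun B hB => (hF B (Finset.mem_sdiff.mp hB).1).compl)

omit [MeasurableSpace Ω] in
lemma atom_subset_or {F T : Finset (Set Ω)} (hT : T ⊆ F) {B : Set Ω} (hB : B ∈ F) :
    atom F T ⊆ B ∨ atom F T ⊆ Bᶜ := by
  by_cases h : B ∈ T
  · left; intro ω hω; exact (mem_atom.mp hω).1 B h
  · right; intro ω hω; exact (mem_atom.mp hω).2 B hB h

omit [MeasurableSpace Ω] in
lemma atom_disjoint {F T T' : Finset (Set Ω)} (hT : T ⊆ F) (hT' : T' ⊆ F)
    (hne : T ≠ T') : Disjoint (atom F T) (atom F T') := by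
  have : ∃ B, (B ∈ T ∧ B ∉ T') ∨ (B ∈ T' ∧ B ∉ T) := by
    by_contra hc
    push_neg at hc
    apply hne
    ext B
    exact ⟨fun h => (hc B).1 h, fun h => (hc B).2 h⟩
  obtain ⟨B, hB | hB⟩ := this
  · apply Set.disjoint_left.mpr
    intro ω hω hω'
    exact (mem_atom.mp hω').2 B (hT hB.1) hB.2 ((mem_atom.mp hω).1 B hB.1)
  · apply Set.disjoint_left.mpr
    intro ω hω hω'
    exact (mem_atom.mp hω).2 B (hT' hB.1) hB.2 ((mem_atom.mp hω').1 B hB.1)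

omit [MeasurableSpace Ω] in
open Classical in
lemma mem_atom_filter (F : Finset (Set Ω)) (ω : Ω) :
    ω ∈ atom F (F.filter (fun B => ω ∈ B)) := by
  rw [mem_atom]
  constructor
  · intro B hB; exact (Finset.mem_filter.mp hB).2
  · intro B hB hBT hωB
    exact hBT (Finset.mem_filter.mpr ⟨hB, hωB⟩)

/-! ### enumeration of atoms -/

open Classical in
/-- the number of atoms -/
noncomputable def na (F : Finset (Set Ω)) : ℕ := F.powerset.toList.length

open Classical in
/-- enumeration of atoms of `F` -/
noncomputable def atomSeq (F : Finset (Set Ω)) (t : ℕ) : Set Ω :=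
  atom F (F.powerset.toList.getD t ∅)

omit [MeasurableSpace Ω] in
open Classical in
lemma getD_subset (F : Finset (Set Ω)) (t : ℕ) : F.powerset.toList.getD t ∅ ⊆ F := by
  by_cases h : t < F.powerset.toList.length
  · rw [List.getD_eq_getElem _ _ h]
    have : F.powerset.toList[t] ∈ F.powerset.toList := List.getElem_mem h
    rw [Finset.mem_toList, Finset.mem_powerset] at this
    exact this
  · rw [List.getD_eq_default _ _ (by omega)]
    exact Finset.empty_subset F

open Classical in
lemma atomSeq_measurable {F : Finset (Set Ω)} (hF : ∀ B ∈ F, MeasurableSet B) (t : ℕ) :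
    MeasurableSet (atomSeq F t) :=
  atom_measurable hF (getD_subset F t)

omit [MeasurableSpace Ω] in
open Classical in
lemma atomSeq_subset_or {F : Finset (Set Ω)} {B : Set Ω} (hB : B ∈ F) (t : ℕ) :
    atomSeq F t ⊆ B ∨ atomSeq F t ⊆ Bᶜ :=
  atom_subset_or (getD_subset F t) hB

omit [MeasurableSpace Ω] in
open Classical in
lemma atomSeq_disjoint {F : Finset (Set Ω)} {t t' : ℕ} (ht : t < na F) (ht' : t' < na F)
    (hne : t ≠ t') : Disjoint (atomSeq F t) (atomSeq F t') := by
  apply atom_disjoint (getD_subset F t) (getD_subset F t')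
  rw [List.getD_eq_getElem _ _ ht, List.getD_eq_getElem _ _ ht']
  intro h
  exact hne (List.Nodup.getElem_inj_iff (F.powerset.nodup_toList)|>.mp h)

omit [MeasurableSpace Ω] in
open Classical in
lemma atomSeq_cover (F : Finset (Set Ω)) (ω : Ω) : ∃ t < na F, ω ∈ atomSeq F t := by
  have hmem : F.filter (fun B => ω ∈ B) ∈ F.powerset.toList := by
    rw [Finset.mem_toList, Finset.mem_powerset]
    exact Finset.filter_subset _ _
  obtain ⟨t, ht, hget⟩ := List.mem_iff_getElem.mp hmem
  refine ⟨t, ht, ?_⟩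
  rw [atomSeq, List.getD_eq_getElem _ _ ht, hget]
  exact mem_atom_filter F ω

omit [MeasurableSpace Ω] in
open Classical in
lemma na_pos (F : Finset (Set Ω)) : 0 < na F := by
  rw [na, List.length_pos_iff]
  intro h
  have : F.powerset = ∅ := Finset.toList_eq_nil.mp h
  exact absurd (Finset.mem_powerset.mpr (Finset.empty_subset F))
    (by rw [this]; exact Finset.notMem_empty _)

end Stmt3Aux

namespace Stmt3Aux

set_option linter.unusedSectionVars false
set_option linter.unusedVariables false

variable {Ω : Type*} [MeasurableSpace Ω]

/-- the ordered partition: block `j` consists of the pieces `(C (j+1) \ C j) ∩ atom t` -/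
noncomputable def partE (F : Finset (Set Ω)) (C : ℕ → Set Ω) (i : ℕ) : Set Ω :=
  (C (i / na F + 1) \ C (i / na F)) ∩ atomSeq F (i % na F)

section chain

variable {F : Finset (Set Ω)} {C : ℕ → Set Ω} {k : ℕ}

lemma partE_measurable (hF : ∀ B ∈ F, MeasurableSet B)
    (hCmeas : ∀ j, MeasurableSet (C j)) (i : ℕ) : MeasurableSet (partE F C i) :=
  ((hCmeas _).diff (hCmeas _)).inter (atomSeq_measurable hF _)

omit [MeasurableSpace Ω] in
lemma partE_disjoint (hCmono : Monotone C) (i j : ℕ) (hne : i ≠ j) : Disjoint (partE F C i) (partE F C j) := by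
  by_cases hq : i / na F = j / na F
  · have hr : i % na F ≠ j % na F := by
      intro h
      have h1 := Nat.div_add_mod i (na F)
      have h2 := Nat.div_add_mod j (na F)
      rw [hq, h] at h1
      exact hne (by omega)
    have := atomSeq_disjoint (F := F) (Nat.mod_lt _ (na_pos F)) (Nat.mod_lt _ (na_pos F)) hr
    exact Disjoint.mono Set.inter_subset_right Set.inter_subset_right this
  · rcases lt_or_gt_of_ne hq with h | h
    · apply Disjoint.mono Set.inter_subset_left Set.inter_subset_left
      apply Set.disjoint_left.mpr
      intro ω hω hω'
      exact hω'.2 (hCmono (by omega : i / na F + 1 ≤ j / na F) hω.1)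
    · apply Disjoint.mono Set.inter_subset_left Set.inter_subset_left
      apply Set.disjoint_left.mpr
      intro ω hω hω'
      exact hω.2 (hCmono (by omega : j / na F + 1 ≤ i / na F) hω'.1)

omit [MeasurableSpace Ω] in
lemma partE_refines {B : Set Ω} (hB : B ∈ F) (i : ℕ) :
    partE F C i ⊆ B ∨ partE F C i ⊆ Bᶜ := by
  rcases atomSeq_subset_or hB (i % na F) with h | h
  · exact Or.inl (Set.inter_subset_right.trans h)
  · exact Or.inr (Set.inter_subset_right.trans h)

omit [MeasurableSpace Ω] in
lemma pre_partE (hCmono : Monotone C) (hC0 : C 0 = ∅) (j : ℕ) :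
    pre (partE F C) (j * na F) = C j := by
  induction j with
  | zero => simpa [pre_zero] using hC0.symm
  | succ j ih =>
    have key : ∀ t ≤ na F, pre (partE F C) (j * na F + t)
        = C j ∪ ((C (j+1) \ C j) ∩ ⋃ s ∈ Finset.range t, atomSeq F s) := by
      intro t ht
      induction t with
      | zero => simp [ih]
      | succ t iht =>
        have ht' : t ≤ na F := by omega
        rw [show j * na F + (t+1) = (j * na F + t) + 1 by omega, pre_succ, iht ht']
        have hq : (j * na F + t) / na F = j := by
          rw [Nat.add_comm, Nat.add_mul_div_right _ _ (na_pos F),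
            Nat.div_eq_of_lt (by omega), Nat.zero_add]
        have hr : (j * na F + t) % na F = t := by
          rw [Nat.add_comm, Nat.add_mul_mod_self_right, Nat.mod_eq_of_lt (by omega)]
        rw [partE, hq, hr, Finset.range_add_one, Finset.set_biUnion_insert]
        rw [Set.union_assoc, ← Set.inter_union_distrib_left, Set.union_comm (atomSeq F t)]
    have := key (na F) (le_refl _)
    have hcover : ⋃ s ∈ Finset.range (na F), atomSeq F s = Set.univ := by
      apply Set.eq_univ_of_forall
      intro ω
      obtain ⟨t, ht, hω⟩ := atomSeq_cover F ω
      simp only [Set.mem_iUnion, Finset.mem_range, exists_prop]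
      exact ⟨t, ht, hω⟩
    rw [hcover, Set.inter_univ] at this
    rw [Nat.succ_mul, this, Set.union_diff_cancel (hCmono (Nat.le_succ j))]

end chain

end Stmt3Aux

namespace Stmt3Aux

set_option linter.unusedSectionVars false
set_option linter.unusedVariables false

variable {Ω : Type*} [MeasurableSpace Ω]

open Classical in
noncomputable def nuF (μ : Set Ω → ℝ) (C : ℕ → Set Ω) (k : ℕ) (F : Finset (Set Ω))
    (B : Set Ω) : ℝ :=
  cont μ (partE (F.filter MeasurableSet) C) (k * na (F.filter MeasurableSet)) B

open Classical in
theorem exists_core_measure (μ : Set Ω → ℝ) (hcap : IsCapacity μ)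
    (hconc : ∀ A B : Set Ω, MeasurableSet A → MeasurableSet B →
      μ (A ∪ B) + μ (A ∩ B) ≤ μ A + μ B)
    (hcont : ContAtEmpty μ)
    (C : ℕ → Set Ω) (k : ℕ) (hCmeas : ∀ j, MeasurableSet (C j)) (hCmono : Monotone C)
    (hC0 : C 0 = ∅) (hCk : C k = Set.univ) :
    ∃ Q : MeasureTheory.Measure Ω, MeasureTheory.IsProbabilityMeasure Q ∧
      (∀ A : Set Ω, MeasurableSet A → (Q A).toReal ≤ μ A) ∧
      (∀ j, j ≤ k → (Q (C j)).toReal = μ (C j)) := by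
  classical
  set ν : Finset (Set Ω) → Set Ω → ℝ := fun F B => nuF μ C k F B with hν
  -- basic facts about ν for every F
  have hFmeas : ∀ F : Finset (Set Ω), ∀ B ∈ F.filter MeasurableSet, MeasurableSet B :=
    fun F B hB => (Finset.mem_filter.mp hB).2
  have hE : ∀ F : Finset (Set Ω), ∀ i, MeasurableSet (partE (F.filter MeasurableSet) C i) :=
    fun F i => partE_measurable (hFmeas F) hCmeas i
  have hdisj : ∀ F : Finset (Set Ω), ∀ i j, i ≠ j →
      Disjoint (partE (F.filter MeasurableSet) C i) (partE (F.filter MeasurableSet) C j) :=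
    fun F i j h => partE_disjoint hCmono i j h
  have hpreuniv : ∀ F : Finset (Set Ω),
      pre (partE (F.filter MeasurableSet) C) (k * na (F.filter MeasurableSet)) = Set.univ := by
    intro F
    rw [pre_partE hCmono hC0 k, hCk]
  have hle : ∀ F : Finset (Set Ω), ∀ B : Set Ω, MeasurableSet B → ν F B ≤ μ B :=
    fun F B hB => cont_le hcap hconc (hE F) (hdisj F) hB _
  have hnn : ∀ F B, 0 ≤ ν F B := fun F B => cont_nonneg hcap (hE F) _ B
  have hle1 : ∀ F B, ν F B ≤ 1 := fun F B => cont_le_one hcap (hE F) _ B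
  have hmono : ∀ F : Finset (Set Ω), ∀ A B : Set Ω, A ⊆ B → ν F A ≤ ν F B :=
    fun F A B h => cont_mono hcap (hE F) _ h
  have huniv : ∀ F : Finset (Set Ω), ν F Set.univ = 1 :=
    fun F => cont_univ hcap (hpreuniv F)
  have hempty : ∀ F : Finset (Set Ω), ν F (∅ : Set Ω) = 0 :=
    fun F => cont_empty _
  have hchain : ∀ F : Finset (Set Ω), ∀ j, j ≤ k → ν F (C j) = μ (C j) := by
    intro F j hj
    have h1 : j * na (F.filter MeasurableSet) ≤ k * na (F.filter MeasurableSet) :=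
      Nat.mul_le_mul_right _ hj
    have h2 := cont_prefix hcap (E := partE (F.filter MeasurableSet) C) (hdisj F) h1
    rwa [pre_partE hCmono hC0 j] at h2
  have hadd : ∀ F : Finset (Set Ω), ∀ A B : Set Ω, A ∈ F → MeasurableSet A →
      MeasurableSet B → Disjoint A B → ν F (A ∪ B) = ν F A + ν F B := by
    intro F A B hAF hA hB hAB
    exact cont_add hcap (hE F) _ hAB
      (fun i => partE_refines (Finset.mem_filter.mpr ⟨hAF, hA⟩) i)
  -- the ultrafilter limit
  haveI : Nonempty (Finset (Set Ω)) := ⟨∅⟩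
  let 𝔘 : Ultrafilter (Finset (Set Ω)) := Ultrafilter.of atTop
  have h𝔘 : (𝔘 : Filter (Finset (Set Ω))) ≤ atTop := Ultrafilter.of_le atTop
  have hlim : ∀ B : Set Ω, ∃ x, Tendsto (fun F => ν F B) (𝔘 : Filter _) (𝓝 x) := by
    intro B
    have hprin : (Ultrafilter.map (fun F => ν F B) 𝔘 : Filter ℝ) ≤ 𝓟 (Set.Icc 0 1) := by
      rw [Filter.le_principal_iff]
      rw [Ultrafilter.coe_map, Filter.mem_map]
      have : (fun F => ν F B) ⁻¹' Set.Icc 0 1 = Set.univ := by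
        apply Set.eq_univ_of_forall
        intro F
        exact ⟨hnn F B, hle1 F B⟩
      rw [this]
      exact Filter.univ_mem
    obtain ⟨x, _, hx⟩ := (isCompact_Icc (a := (0:ℝ)) (b := 1)).ultrafilter_le_nhds
      (Ultrafilter.map (fun F => ν F B) 𝔘) hprin
    exact ⟨x, by rwa [Ultrafilter.coe_map] at hx⟩
  choose P hPt using hlim
  have hPuniv : P Set.univ = 1 := by
    refine tendsto_nhds_unique (hPt Set.univ) ?_
    simpa only [huniv] using (tendsto_const_nhds : Tendsto (fun _ : Finset (Set Ω) => (1:ℝ)) _ _)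
  have hPempty : P (∅ : Set Ω) = 0 := by
    refine tendsto_nhds_unique (hPt ∅) ?_
    simpa only [hempty] using (tendsto_const_nhds : Tendsto (fun _ : Finset (Set Ω) => (0:ℝ)) _ _)
  have hPle : ∀ A : Set Ω, MeasurableSet A → P A ≤ μ A := by
    intro A hA
    exact le_of_tendsto (hPt A) (Filter.Eventually.of_forall (fun F => hle F A hA))
  have hPnn : ∀ B : Set Ω, 0 ≤ P B := by
    intro B
    exact ge_of_tendsto (hPt B) (Filter.Eventually.of_forall (fun F => hnn F B))
  have hPmono : ∀ A B : Set Ω, A ⊆ B → P A ≤ P B := by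
    intro A B hAB
    exact le_of_tendsto_of_tendsto' (hPt A) (hPt B) (fun F => hmono F A B hAB)
  have hPchain : ∀ j, j ≤ k → P (C j) = μ (C j) := by
    intro j hj
    refine tendsto_nhds_unique (hPt (C j)) ?_
    have : (fun F : Finset (Set Ω) => ν F (C j)) = fun _ => μ (C j) := by
      funext F; exact hchain F j hj
    rw [this]
    exact tendsto_const_nhds
  have hPadd : ∀ A B : Set Ω, MeasurableSet A → MeasurableSet B → Disjoint A B →
      P (A ∪ B) = P A + P B := by
    intro A B hA hB hAB
    have hev : ∀ᶠ F in (𝔘 : Filter (Finset (Set Ω))), ν F A + ν F B = ν F (A ∪ B) := by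
      refine h𝔘 (Filter.eventually_atTop.mpr ⟨{A, B}, fun F hF => ?_⟩)
      have hAF : A ∈ F := hF (by simp)
      exact (hadd F A B hAF hA hB hAB).symm
    exact tendsto_nhds_unique (hPt (A ∪ B)) (Tendsto.congr' hev ((hPt A).add (hPt B)))
  -- countable additivity
  have hfinadd : ∀ (f : ℕ → Set Ω), (∀ i, MeasurableSet (f i)) → Pairwise (Function.onFun Disjoint f) →
      ∀ n, P (pre f n) = ∑ i ∈ Finset.range n, P (f i) := by
    intro f hf hpd n
    induction n with
    | zero => simpa [pre_zero] using hPempty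
    | succ n ih =>
      rw [pre_succ, Finset.sum_range_succ, ← ih]
      apply hPadd _ _ (pre_measurable hf n) (hf n)
      apply Set.disjoint_left.mpr
      intro ω hω hω'
      simp only [pre, Set.mem_iUnion, Finset.mem_range, exists_prop] at hω
      obtain ⟨i, hi, h⟩ := hω
      exact (hpd (show i ≠ n by omega)).ne_of_mem h hω' rfl
  have hcountadd : ∀ (f : ℕ → Set Ω), (∀ i, MeasurableSet (f i)) →
      Pairwise (Function.onFun Disjoint f) → HasSum (fun i => P (f i)) (P (⋃ i, f i)) := by
    intro f hf hpd
    have hUmeas : MeasurableSet (⋃ i, f i) := MeasurableSet.iUnion hf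
    have hsub : ∀ n, pre f n ⊆ ⋃ i, f i := by
      intro n ω hω
      simp only [pre, Set.mem_iUnion, Finset.mem_range, exists_prop] at hω ⊢
      obtain ⟨i, _, h⟩ := hω
      exact ⟨i, h⟩
    have hsplit : ∀ n, P (⋃ i, f i) = P (pre f n) + P ((⋃ i, f i) \ pre f n) := by
      intro n
      rw [← hPadd _ _ (pre_measurable hf n) (hUmeas.diff (pre_measurable hf n))
        disjoint_sdiff_self_right]
      rw [Set.union_diff_cancel (hsub n)]
    have htail : Tendsto (fun n => P ((⋃ i, f i) \ pre f n)) atTop (𝓝 0) := by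
      apply squeeze_zero (fun n => hPnn _)
        (fun n => hPle _ (hUmeas.diff (pre_measurable hf n)))
      apply hcont
      · exact fun n => hUmeas.diff (pre_measurable hf n)
      · intro a b hab
        exact Set.diff_subset_diff_right (pre_mono f hab)
      · apply Set.eq_empty_of_subset_empty
        intro ω hω
        have h1 : ω ∈ (⋃ i, f i) \ pre f 0 := Set.mem_iInter.mp hω 0
        obtain ⟨i, hi⟩ := Set.mem_iUnion.mp h1.1
        have h2 := Set.mem_iInter.mp hω (i + 1)
        exact h2.2 (subset_pre (Nat.lt_succ_self i) hi)
    have hkey : Tendsto (fun n => ∑ i ∈ Finset.range n, P (f i)) atTop (𝓝 (P (⋃ i, f i))) := by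
      have : (fun n => ∑ i ∈ Finset.range n, P (f i))
          = fun n => P (⋃ i, f i) - P ((⋃ i, f i) \ pre f n) := by
        funext n
        rw [← hfinadd f hf hpd n, hsplit n]
        ring
      rw [this]
      simpa using (tendsto_const_nhds (x := P (⋃ i, f i))).sub htail
    have hsummable : Summable (fun i => P (f i)) := by
      apply summable_of_sum_range_le (c := P (⋃ i, f i)) (fun i => hPnn _)
      intro n
      rw [← hfinadd f hf hpd n]
      exact hPmono _ _ (hsub n)
    exact (hasSum_iff_tendsto_nat_of_nonneg (fun i => hPnn (f i)) _).mpr hkey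
  -- build the measure
  have hadd' : ∀ (f : ℕ → Set Ω), (∀ i, MeasurableSet (f i)) → Pairwise (Function.onFun Disjoint f) →
      ENNReal.ofReal (P (⋃ i, f i)) = ∑' i, ENNReal.ofReal (P (f i)) := by
    intro f hf hpd
    have h := hcountadd f hf hpd
    rw [← h.tsum_eq]
    exact ENNReal.ofReal_tsum_of_nonneg (fun i => hPnn (f i)) h.summable
  let Q : MeasureTheory.Measure Ω := MeasureTheory.Measure.ofMeasurable
    (fun s _ => ENNReal.ofReal (P s)) (by simp [hPempty])
    (fun f hf hpd => hadd' f hf hpd)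
  have hQapp : ∀ s : Set Ω, MeasurableSet s → Q s = ENNReal.ofReal (P s) :=
    fun s hs => MeasureTheory.Measure.ofMeasurable_apply s hs
  have hQtoReal : ∀ s : Set Ω, MeasurableSet s → (Q s).toReal = P s := by
    intro s hs
    rw [hQapp s hs, ENNReal.toReal_ofReal (hPnn s)]
  refine ⟨Q, ⟨?_⟩, ?_, ?_⟩
  · rw [hQapp _ MeasurableSet.univ, hPuniv, ENNReal.ofReal_one]
  · intro A hA
    rw [hQtoReal A hA]
    exact hPle A hA
  · intro j hj
    rw [hQtoReal _ (hCmeas j)]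
    exact hPchain j hj

end Stmt3Aux

namespace Stmt3Aux

set_option linter.unusedSectionVars false
set_option linter.unusedVariables false

open MeasureTheory

variable {Ω : Type*} [MeasurableSpace Ω]

lemma toReal_compl (Q : Measure Ω) [IsProbabilityMeasure Q] {S : Set Ω}
    (hS : MeasurableSet S) : (Q Sᶜ).toReal = 1 - (Q S).toReal := by
  have h := prob_compl_eq_one_sub (μ := Q) hS
  rw [h, ENNReal.toReal_sub_of_le prob_le_one (by simp), ENNReal.toReal_one]

lemma antitone_integrableOn {u v : ℝ → ℝ} (hu : Antitone u) {S : Set ℝ}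
    (hS : MeasurableSet S) (hv : IntegrableOn v S volume)
    (hb : ∀ t ∈ S, |u t| ≤ v t) : IntegrableOn u S volume := by
  apply Integrable.mono' hv (hu.measurable.aestronglyMeasurable.restrict)
  filter_upwards [ae_restrict_mem hS] with t ht
  rw [Real.norm_eq_abs]
  exact hb t ht

lemma integrable_of_tail (Q : Measure Ω) [IsProbabilityMeasure Q] {f : Ω → ℝ}
    (hf : Measurable f) {H : ℝ → ℝ} (hH : IntegrableOn H (Set.Ioi (0:ℝ)) volume)
    (hb : ∀ t : ℝ, 0 < t → (Q {a | t ≤ |f a|}).toReal ≤ H t) : Integrable f Q := by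
  refine ⟨hf.aestronglyMeasurable, ?_⟩
  rw [hasFiniteIntegral_iff_norm]
  simp_rw [Real.norm_eq_abs]
  rw [lintegral_eq_lintegral_meas_lt Q (Filter.Eventually.of_forall fun a => abs_nonneg _)
    hf.abs.aemeasurable]
  have h2 : ∫⁻ t in Set.Ioi (0:ℝ), Q {a | t < |f a|}
      ≤ ∫⁻ t in Set.Ioi (0:ℝ), ENNReal.ofReal (H t) := by
    apply lintegral_mono_ae
    filter_upwards [ae_restrict_mem measurableSet_Ioi] with t ht
    calc Q {a | t < |f a|} ≤ Q {a | t ≤ |f a|} :=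
          measure_mono (fun a (ha : t < |f a|) => le_of_lt ha)
      _ = ENNReal.ofReal ((Q {a | t ≤ |f a|}).toReal) :=
          (ENNReal.ofReal_toReal (measure_ne_top Q _)).symm
      _ ≤ ENNReal.ofReal (H t) := ENNReal.ofReal_le_ofReal (hb t ht)
  refine lt_of_le_of_lt h2 ?_
  rw [← ofReal_integral_eq_lintegral_ofReal hH ?_]
  · exact ENNReal.ofReal_lt_top
  · filter_upwards [ae_restrict_mem measurableSet_Ioi] with t ht
    exact le_trans ENNReal.toReal_nonneg (hb t ht)

/-- the signed layer-cake formula for a probability measure -/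
lemma layercake_signed (Q : Measure Ω) [IsProbabilityMeasure Q] {f : Ω → ℝ}
    (hf : Measurable f) (hint : Integrable f Q) :
    ∫ ω, f ω ∂Q = (∫ t in Set.Ioi (0:ℝ), (Q {ω | f ω ≥ t}).toReal)
      + ∫ t in Set.Iio (0:ℝ), ((Q {ω | f ω ≥ t}).toReal - 1) := by
  have hpos : Integrable (fun ω => max (f ω) 0) Q := hint.pos_part
  have hneg : Integrable (fun ω => max (-f ω) 0) Q := hint.neg.pos_part
  have hsplit : ∫ ω, f ω ∂Q = (∫ ω, max (f ω) 0 ∂Q) - ∫ ω, max (-f ω) 0 ∂Q := by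
    rw [← integral_sub hpos hneg]
    congr 1
    funext ω
    rcases le_total (f ω) 0 with h | h
    · rw [max_eq_right h, max_eq_left (by linarith)]; ring
    · rw [max_eq_left h, max_eq_right (by linarith)]; ring
  have hp : ∫ ω, max (f ω) 0 ∂Q = ∫ t in Set.Ioi (0:ℝ), (Q {ω | f ω ≥ t}).toReal := by
    rw [hpos.integral_eq_integral_meas_le (Filter.Eventually.of_forall fun ω => le_max_right _ _)]
    apply setIntegral_congr_fun measurableSet_Ioi
    intro t ht
    have hset : {a | t ≤ max (f a) 0} = {ω | f ω ≥ t} := by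
      ext a
      simp only [Set.mem_setOf_eq, le_max_iff, ge_iff_le]
      exact ⟨fun h => h.resolve_right
        (by intro h'; exact absurd (lt_of_lt_of_le ht h') (lt_irrefl 0)), fun h => Or.inl h⟩
    dsimp only
    rw [hset]
    rfl
  have hn : ∫ ω, max (-f ω) 0 ∂Q = ∫ t in Set.Ioi (0:ℝ), (Q {a | f a ≤ -t}).toReal := by
    rw [hneg.integral_eq_integral_meas_le (Filter.Eventually.of_forall fun ω => le_max_right _ _)]
    apply setIntegral_congr_fun measurableSet_Ioi
    intro t ht
    have hset : {a | t ≤ max (-f a) 0} = {a | f a ≤ -t} := by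
      ext a
      simp only [Set.mem_setOf_eq, le_max_iff]
      constructor
      · intro h
        have h2 : t ≤ -f a := h.resolve_right
          (by intro h'; exact absurd (lt_of_lt_of_le ht h') (lt_irrefl 0))
        linarith
      · intro h; left; linarith
    dsimp only
    rw [hset]
    rfl
  have hiio : ∫ t in Set.Iio (0:ℝ), ((Q {ω | f ω ≥ t}).toReal - 1)
      = - ∫ t in Set.Ioi (0:ℝ), (Q {a | f a ≤ -t}).toReal := by
    have e1 : ∀ t : ℝ, (Q {ω | f ω ≥ t}).toReal - 1 = - (Q {a | f a < t}).toReal := by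
      intro t
      have hc : {a | f a < t} = {ω | f ω ≥ t}ᶜ := by
        ext a; simp [not_le]
      rw [hc, toReal_compl Q (show MeasurableSet {ω | f ω ≥ t} from hf measurableSet_Ici)]
      ring
    simp_rw [e1]
    rw [integral_neg, neg_inj]
    have e2 : ∫ t in Set.Iio (0:ℝ), (Q {a | f a < t}).toReal
        = ∫ t in Set.Iic (0:ℝ), (Q {a | f a < t}).toReal := by
      rw [← MeasureTheory.integral_Iic_eq_integral_Iio]
    rw [e2]
    have e3 := integral_comp_neg_Ioi (0:ℝ)
      (fun t => (Q {a | f a < t}).toReal)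
    rw [neg_zero] at e3
    rw [← e3]
    -- now: ∫ t in Ioi 0, (Q {a | f a ≤ -t}).toReal = ∫ t in Ioi 0, (Q {a | f a < -t}).toReal
    apply integral_congr_ae
    have := meas_le_ae_eq_meas_lt Q (volume.restrict (Set.Ioi (0:ℝ))) (fun a => - f a)
    filter_upwards [this] with t ht
    have h1 : {a | f a ≤ -t} = {a | t ≤ -f a} := by ext a; simp; constructor <;> intro <;> linarith
    have h2 : {a | f a < -t} = {a | t < -f a} := by ext a; simp; constructor <;> intro <;> linarith
    rw [h1, h2, ht]
  rw [hsplit, hp, hn, hiio]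
  ring

end Stmt3Aux

namespace Stmt3Aux

set_option linter.unusedSectionVars false
set_option linter.unusedVariables false

open MeasureTheory

lemma antitone_integrableOn_Ioc {u : ℝ → ℝ} (hu : Antitone u) (a b : ℝ) :
    IntegrableOn u (Set.Ioc a b) volume := by
  by_cases hab : a ≤ b
  · apply antitone_integrableOn hu measurableSet_Ioc
      (integrableOn_const (C := max |u a| |u b|) measure_Ioc_lt_top.ne)
    intro t ht
    have h1 : u t ≤ u a := hu (le_of_lt ht.1)
    have h2 : u b ≤ u t := hu ht.2
    rw [abs_le]
    constructor
    · calc -(max |u a| |u b|) ≤ -|u b| := by simp [le_max_right]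
        _ ≤ u b := neg_abs_le _
        _ ≤ u t := h2
    · calc u t ≤ u a := h1
        _ ≤ |u a| := le_abs_self _
        _ ≤ max |u a| |u b| := le_max_left _ _
  · rw [Set.Ioc_eq_empty (fun h => hab (le_of_lt h))]
    exact integrableOn_empty

lemma cell_bound {u v : ℝ → ℝ} (hu : Antitone u) (hv : Antitone v)
    (hvu : ∀ t, v t ≤ u t) {c d : ℝ} (hcd : c ≤ d) (hend : v d = u d) :
    ∫ t in Set.Ioc c d, (u t - v t) ≤ (d - c) * (u c - u d) := by
  have hb : ∀ t ∈ Set.Ioc c d, u t - v t ≤ u c - u d := by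
    intro t ht
    have h1 : u t ≤ u c := hu (le_of_lt ht.1)
    have h2 : u d ≤ v t := hend ▸ hv ht.2
    linarith
  have hint : IntegrableOn (fun t => u t - v t) (Set.Ioc c d) volume :=
    (antitone_integrableOn_Ioc hu c d).sub (antitone_integrableOn_Ioc hv c d)
  calc ∫ t in Set.Ioc c d, (u t - v t)
      ≤ ∫ _ in Set.Ioc c d, (u c - u d) := by
        apply setIntegral_mono_on hint (integrableOn_const measure_Ioc_lt_top.ne)
          measurableSet_Ioc hb
    _ = (d - c) * (u c - u d) := by
        rw [setIntegral_const, smul_eq_mul, Real.volume_real_Ioc_of_le hcd]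

lemma riemann_bound {u v : ℝ → ℝ} (hu : Antitone u) (hv : Antitone v)
    (hvu : ∀ t, v t ≤ u t) (a δ : ℝ) (hδ : 0 < δ) :
    ∀ n : ℕ, (∀ i : ℕ, i ≤ n → v (a + i * δ) = u (a + i * δ)) →
      ∫ t in Set.Ioc a (a + n * δ), (u t - v t) ≤ δ * (u a - u (a + n * δ)) := by
  intro n
  induction n with
  | zero =>
    intro _
    simp
  | succ n ih =>
    intro hgrid
    have hstep : a + n * δ ≤ a + (n + 1 : ℕ) * δ := by
      push_cast; nlinarith
    have ha : a ≤ a + n * δ := by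
      have : 0 ≤ (n:ℝ) * δ := mul_nonneg (Nat.cast_nonneg n) hδ.le
      linarith
    have hsplit : ∫ t in Set.Ioc a (a + (n + 1 : ℕ) * δ), (u t - v t)
        = (∫ t in Set.Ioc a (a + n * δ), (u t - v t))
          + ∫ t in Set.Ioc (a + n * δ) (a + (n + 1 : ℕ) * δ), (u t - v t) := by
      rw [← Set.Ioc_union_Ioc_eq_Ioc ha hstep]
      apply setIntegral_union (Set.Ioc_disjoint_Ioc_of_le le_rfl) measurableSet_Ioc
      · exact (antitone_integrableOn_Ioc hu _ _).sub (antitone_integrableOn_Ioc hv _ _)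
      · exact (antitone_integrableOn_Ioc hu _ _).sub (antitone_integrableOn_Ioc hv _ _)
    have hcell : ∫ t in Set.Ioc (a + n * δ) (a + (n + 1 : ℕ) * δ), (u t - v t)
        ≤ δ * (u (a + n * δ) - u (a + (n + 1 : ℕ) * δ)) := by
      have h := cell_bound hu hv hvu hstep (hgrid (n + 1) (le_refl _))
      have hd : (a + (n + 1 : ℕ) * δ) - (a + n * δ) = δ := by push_cast; ring
      rw [hd] at h
      exact h
    have hih := ih (fun i hi => hgrid i (Nat.le_succ_of_le hi))
    rw [hsplit]
    have := add_le_add hih hcell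
    linarith
  
lemma tail_small {H : ℝ → ℝ} (hH : IntegrableOn H (Set.Ioi (0:ℝ)) volume)
    (hHnn : ∀ t : ℝ, 0 < t → 0 ≤ H t) {ε : ℝ} (hε : 0 < ε) :
    ∃ N : ℕ, 0 < N ∧ ∫ t in Set.Ioi (N : ℝ), H t ≤ ε := by
  have hUnion : (⋃ n : ℕ, Set.Ioc (0:ℝ) (n:ℝ)) = Set.Ioi (0:ℝ) := by
    ext x
    simp only [Set.mem_iUnion, Set.mem_Ioc, Set.mem_Ioi]
    constructor
    · rintro ⟨n, h1, _⟩; exact h1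
    · intro hx
      obtain ⟨n, hn⟩ := exists_nat_ge x
      exact ⟨n, hx, hn⟩
  have hmono : Monotone (fun n : ℕ => Set.Ioc (0:ℝ) (n:ℝ)) := by
    intro m n hmn
    exact Set.Ioc_subset_Ioc_right (by exact_mod_cast hmn)
  have htend := MeasureTheory.tendsto_setIntegral_of_monotone
    (fun n : ℕ => measurableSet_Ioc) hmono (by rw [hUnion]; exact hH)
  rw [hUnion] at htend
  have hev : ∀ᶠ n : ℕ in Filter.atTop,
      (∫ t in Set.Ioi (0:ℝ), H t) - (∫ t in Set.Ioc (0:ℝ) (n:ℝ), H t) ≤ ε := by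
    have := htend.sub (tendsto_const_nhds (x := ∫ t in Set.Ioi (0:ℝ), H t))
    have h2 : Filter.Tendsto (fun n : ℕ =>
        (∫ t in Set.Ioi (0:ℝ), H t) - (∫ t in Set.Ioc (0:ℝ) (n:ℝ), H t)) Filter.atTop (𝓝 0) := by
      have h3 := (tendsto_const_nhds (x := ∫ t in Set.Ioi (0:ℝ), H t)).sub htend
      simpa using h3
    exact h2.eventually (eventually_le_nhds hε)
  obtain ⟨N, hN⟩ := (hev.and (Filter.eventually_ge_atTop 1)).exists
  refine ⟨N, by omega, ?_⟩
  have hsplit : ∫ t in Set.Ioi (0:ℝ), H t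
      = (∫ t in Set.Ioc (0:ℝ) (N:ℝ), H t) + ∫ t in Set.Ioi (N:ℝ), H t := by
    rw [← Set.Ioc_union_Ioi_eq_Ioi (by positivity : (0:ℝ) ≤ N)]
    apply setIntegral_union Set.Ioc_disjoint_Ioi_same measurableSet_Ioi
    · exact hH.mono_set Set.Ioc_subset_Ioi_self
    · exact hH.mono_set (Set.Ioi_subset_Ioi (by positivity))
  have := hN.1
  linarith
  
end Stmt3Aux

namespace Stmt3Aux

set_option linter.unusedSectionVars false
set_option linter.unusedVariables false

open MeasureTheory

variable {Ω : Type*} [MeasurableSpace Ω]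

section choquetFacts

variable {μ : Set Ω → ℝ} (hcap : IsCapacity μ)
  (hconc : ∀ A B : Set Ω, MeasurableSet A → MeasurableSet B →
      μ (A ∪ B) + μ (A ∩ B) ≤ μ A + μ B)
  {ξ : Ω → ℝ} (hξ : Measurable ξ)
  (hξint : MeasureTheory.IntegrableOn (fun t => μ {ω | |ξ ω| ≥ t}) (Set.Ioi (0:ℝ)))

include hcap hξ

omit hcap in
lemma lev_meas (t : ℝ) : MeasurableSet {ω | ξ ω ≥ t} := hξ measurableSet_Ici

omit hcap in
lemma levabs_meas (t : ℝ) : MeasurableSet {ω | |ξ ω| ≥ t} := hξ.abs measurableSet_Ici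

omit hcap in
lemma levlt_meas (t : ℝ) : MeasurableSet {ω | ξ ω < t} := hξ measurableSet_Iio

lemma G_anti : Antitone (fun t => μ {ω | ξ ω ≥ t}) := by
  intro s t hst
  exact hcap.2.2 _ _ (lev_meas hξ t) (lev_meas hξ s) (fun ω hω => le_trans hst hω)

lemma H_anti : Antitone (fun t => μ {ω | |ξ ω| ≥ t}) := by
  intro s t hst
  exact hcap.2.2 _ _ (levabs_meas hξ t) (levabs_meas hξ s) (fun ω hω => le_trans hst hω)

lemma G_nonneg (t : ℝ) : 0 ≤ μ {ω | ξ ω ≥ t} := by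
  have := hcap.2.2 ∅ _ MeasurableSet.empty (lev_meas hξ t) (Set.empty_subset _)
  rwa [hcap.1] at this

lemma H_nonneg (t : ℝ) : 0 ≤ μ {ω | |ξ ω| ≥ t} := by
  have := hcap.2.2 ∅ _ MeasurableSet.empty (levabs_meas hξ t) (Set.empty_subset _)
  rwa [hcap.1] at this

lemma G_le_one (t : ℝ) : μ {ω | ξ ω ≥ t} ≤ 1 := by
  have := hcap.2.2 _ Set.univ (lev_meas hξ t) MeasurableSet.univ (Set.subset_univ _)
  rwa [hcap.2.1] at this

lemma G_le_H {t : ℝ} (ht : 0 < t) : μ {ω | ξ ω ≥ t} ≤ μ {ω | |ξ ω| ≥ t} := by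
  apply hcap.2.2 _ _ (lev_meas hξ t) (levabs_meas hξ t)
  intro ω (hω : t ≤ ξ ω)
  exact le_trans hω (le_abs_self _)

lemma lt_le_H {t : ℝ} (ht : t < 0) : μ {ω | ξ ω < t} ≤ μ {ω | |ξ ω| ≥ -t} := by
  apply hcap.2.2 _ _ (levlt_meas hξ t) (levabs_meas hξ (-t))
  intro ω hω
  have : ξ ω < t := hω
  have h2 : -ξ ω > -t := by linarith
  calc -t ≤ -ξ ω := le_of_lt h2
    _ ≤ |ξ ω| := neg_le_abs _

include hconc in
lemma one_sub_G_le {t : ℝ} (ht : t < 0) : 1 - μ {ω | ξ ω ≥ t} ≤ μ {ω | |ξ ω| ≥ -t} := by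
  have key := hconc {ω | ξ ω ≥ t} {ω | ξ ω < t} (lev_meas hξ t) (levlt_meas hξ t)
  have h1 : {ω | ξ ω ≥ t} ∪ {ω | ξ ω < t} = Set.univ := by
    apply Set.eq_univ_of_forall
    intro ω
    rcases le_or_gt t (ξ ω) with h | h
    · exact Or.inl h
    · exact Or.inr h
  have h2 : {ω | ξ ω ≥ t} ∩ {ω | ξ ω < t} = ∅ := by
    apply Set.eq_empty_of_subset_empty
    rintro ω ⟨(ha : t ≤ ξ ω), (hb : ξ ω < t)⟩
    exact absurd (lt_of_le_of_lt ha hb) (lt_irrefl _)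
  rw [h1, h2, hcap.1, hcap.2.1, add_zero] at key
  have h3 := lt_le_H hcap hξ ht
  linarith

include hξint in
lemma G_intOn : IntegrableOn (fun t => μ {ω | ξ ω ≥ t}) (Set.Ioi (0:ℝ)) volume := by
  apply antitone_integrableOn (G_anti hcap hξ) measurableSet_Ioi hξint
  intro t ht
  rw [abs_of_nonneg (G_nonneg hcap hξ t)]
  exact G_le_H hcap hξ ht

omit hcap hξ in
/-- reflection transfer of integrability -/
lemma integrableOn_comp_neg {H : ℝ → ℝ} {s : Set ℝ} (hs : MeasurableSet s)
    (h : IntegrableOn H s volume) :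
    IntegrableOn (fun t => H (-t)) ((fun t : ℝ => -t) ⁻¹' s) volume := by
  have hind : Integrable (s.indicator H) volume := (integrable_indicator_iff hs).mpr h
  have h2 : Integrable (fun x => s.indicator H (-x)) volume := hind.comp_neg
  have h3 : (fun x => s.indicator H (-x))
      = ((fun t : ℝ => -t) ⁻¹' s).indicator (fun t => H (-t)) := by
    funext x
    by_cases hx : -x ∈ s
    · rw [Set.indicator_of_mem hx, Set.indicator_of_mem (by exact hx)]
    · rw [Set.indicator_of_notMem hx, Set.indicator_of_notMem (by exact hx)]
  rw [h3] at h2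
  exact (integrable_indicator_iff (hs.preimage measurable_neg)).mp h2

include hconc hξint in
lemma Gm1_intOn : IntegrableOn (fun t => μ {ω | ξ ω ≥ t} - 1) (Set.Iio (0:ℝ)) volume := by
  have hdom : IntegrableOn (fun t : ℝ => μ {ω | |ξ ω| ≥ -t}) (Set.Iio (0:ℝ)) volume := by
    have := integrableOn_comp_neg measurableSet_Ioi hξint
    have hpre : (fun t : ℝ => -t) ⁻¹' (Set.Ioi 0) = Set.Iio 0 := by
      ext x; simp
    rwa [hpre] at this
  have hGm1anti : Antitone (fun t : ℝ => μ {ω | ξ ω ≥ t} - 1) := by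
    intro s t hst
    have := G_anti hcap hξ hst
    simp only at this ⊢
    linarith
  apply antitone_integrableOn hGm1anti measurableSet_Iio hdom
  intro t ht
  rw [abs_of_nonpos (by linarith [G_le_one hcap hξ t])]
  have := one_sub_G_le hcap hconc hξ (Set.mem_Iio.mp ht)
  linarith

include hconc hξint in
/-- all facts about a core measure needed for the Choquet comparison -/
lemma core_facts (Q : Measure Ω) (hQp : IsProbabilityMeasure Q)
    (hQle : ∀ A : Set Ω, MeasurableSet A → (Q A).toReal ≤ μ A) :
    Integrable ξ Q ∧
    (∫ ω, ξ ω ∂Q = (∫ t in Set.Ioi (0:ℝ), (Q {ω | ξ ω ≥ t}).toReal)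
      + ∫ t in Set.Iio (0:ℝ), ((Q {ω | ξ ω ≥ t}).toReal - 1)) ∧
    IntegrableOn (fun t => (Q {ω | ξ ω ≥ t}).toReal) (Set.Ioi (0:ℝ)) volume ∧
    IntegrableOn (fun t => (Q {ω | ξ ω ≥ t}).toReal - 1) (Set.Iio (0:ℝ)) volume ∧
    (∀ t, (Q {ω | ξ ω ≥ t}).toReal ≤ μ {ω | ξ ω ≥ t}) ∧
    (∀ t, t < 0 → 1 - (Q {ω | ξ ω ≥ t}).toReal ≤ μ {ω | |ξ ω| ≥ -t}) ∧
    Antitone (fun t => (Q {ω | ξ ω ≥ t}).toReal) := by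
  haveI := hQp
  have hgle : ∀ t, (Q {ω | ξ ω ≥ t}).toReal ≤ μ {ω | ξ ω ≥ t} :=
    fun t => hQle _ (lev_meas hξ t)
  have hganti : Antitone (fun t => (Q {ω | ξ ω ≥ t}).toReal) := by
    intro s t hst
    exact ENNReal.toReal_mono (measure_ne_top Q _)
      (measure_mono (fun ω hω => le_trans hst hω))
  have hgnn : ∀ t, (0:ℝ) ≤ (Q {ω | ξ ω ≥ t}).toReal := fun t => ENNReal.toReal_nonneg
  have hint : Integrable ξ Q := by
    apply integrable_of_tail Q hξ hξint
    intro t ht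
    exact hQle _ (levabs_meas hξ t)
  have hcompl : ∀ t, 1 - (Q {ω | ξ ω ≥ t}).toReal = (Q {ω | ξ ω < t}).toReal := by
    intro t
    have hc : {ω | ξ ω < t} = {ω | ξ ω ≥ t}ᶜ := by
      ext ω; simp [not_le]
    rw [hc, toReal_compl Q (lev_meas hξ t)]
  have hg1H : ∀ t, t < 0 → 1 - (Q {ω | ξ ω ≥ t}).toReal ≤ μ {ω | |ξ ω| ≥ -t} := by
    intro t ht
    rw [hcompl t]
    exact (hQle _ (levlt_meas hξ t)).trans (lt_le_H hcap hξ ht)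
  have hgint : IntegrableOn (fun t => (Q {ω | ξ ω ≥ t}).toReal) (Set.Ioi (0:ℝ)) volume := by
    apply antitone_integrableOn hganti measurableSet_Ioi hξint
    intro t ht
    rw [abs_of_nonneg (hgnn t)]
    exact (hgle t).trans (G_le_H hcap hξ ht)
  have hgm1int : IntegrableOn (fun t => (Q {ω | ξ ω ≥ t}).toReal - 1)
      (Set.Iio (0:ℝ)) volume := by
    have hdom : IntegrableOn (fun t : ℝ => μ {ω | |ξ ω| ≥ -t}) (Set.Iio (0:ℝ)) volume := by
      have := integrableOn_comp_neg measurableSet_Ioi hξint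
      have hpre : (fun t : ℝ => -t) ⁻¹' (Set.Ioi 0) = Set.Iio 0 := by
        ext x; simp
      rwa [hpre] at this
    have hgm1anti : Antitone (fun t : ℝ => (Q {ω | ξ ω ≥ t}).toReal - 1) := by
      intro s t hst
      have := hganti hst
      simp only at this ⊢
      linarith
    apply antitone_integrableOn hgm1anti measurableSet_Iio hdom
    intro t ht
    have hg1 : (Q {ω | ξ ω ≥ t}).toReal ≤ 1 := (hgle t).trans (G_le_one hcap hξ t)
    rw [abs_of_nonpos (by linarith)]
    have := hg1H t (Set.mem_Iio.mp ht)
    linarith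
  exact ⟨hint, layercake_signed Q hξ hint, hgint, hgm1int, hgle, hg1H, hganti⟩

end choquetFacts

end Stmt3Aux

namespace Stmt3Aux

set_option linter.unusedSectionVars false
set_option linter.unusedVariables false
set_option maxHeartbeats 1000000

open MeasureTheory

variable {Ω : Type*} [MeasurableSpace Ω]

theorem choquet_eps {μ : Set Ω → ℝ} (hcap : IsCapacity μ)
    (hconc : ∀ A B : Set Ω, MeasurableSet A → MeasurableSet B →
      μ (A ∪ B) + μ (A ∩ B) ≤ μ A + μ B)
    (hcont : ContAtEmpty μ)
    {ξ : Ω → ℝ} (hξ : Measurable ξ)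
    (hξint : MeasureTheory.IntegrableOn (fun t => μ {ω | |ξ ω| ≥ t}) (Set.Ioi (0:ℝ)))
    {ε : ℝ} (hε : 0 < ε) :
    ∃ Q : Measure Ω, IsProbabilityMeasure Q ∧
      (∀ A : Set Ω, MeasurableSet A → (Q A).toReal ≤ μ A) ∧
      choquet μ ξ ≤ (∫ ω, ξ ω ∂Q) + 4 * ε := by
  classical
  obtain ⟨N, hNpos, hNtail⟩ := tail_small hξint (fun t _ => H_nonneg hcap hξ t) hε
  set M : ℝ := (N : ℝ) with hMdef
  have hM : 0 < M := by rw [hMdef]; exact_mod_cast hNpos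
  set n : ℕ := max 1 ⌈M / ε⌉₊ with hndef
  have hn1 : 1 ≤ n := le_max_left _ _
  have hnR : (0:ℝ) < n := by exact_mod_cast hn1
  set δ : ℝ := M / n with hδdef
  have hδ : 0 < δ := div_pos hM hnR
  have hδε : δ ≤ ε := by
    rw [hδdef, div_le_iff₀ hnR]
    have h1 : M / ε ≤ (⌈M / ε⌉₊ : ℝ) := Nat.le_ceil _
    have h2 : (⌈M / ε⌉₊ : ℝ) ≤ (n : ℝ) := by exact_mod_cast le_max_right 1 ⌈M / ε⌉₊
    have := (div_le_iff₀ hε).mp (h1.trans h2)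
    linarith
  have hnδ : (n : ℝ) * δ = M := by
    rw [hδdef]; field_simp
  -- the chain of level sets
  set C : ℕ → Set Ω := fun j =>
    if j = 0 then ∅ else if j ≤ 2 * n + 1 then {ω | ξ ω ≥ M - ((j:ℝ) - 1) * δ}
    else Set.univ with hCdef
  have hCmeas : ∀ j, MeasurableSet (C j) := by
    intro j
    rw [hCdef]
    simp only
    split
    · exact MeasurableSet.empty
    · split
      · exact lev_meas hξ _
      · exact MeasurableSet.univ
  have hCmono : Monotone C := by
    apply monotone_nat_of_le_succ
    intro j
    rw [hCdef]
    simp only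
    by_cases h0 : j = 0
    · rw [if_pos h0]
      exact Set.empty_subset _
    · rw [if_neg h0, if_neg (by omega : ¬ j + 1 = 0)]
      by_cases h1 : j ≤ 2 * n
      · rw [if_pos (by omega : j ≤ 2 * n + 1), if_pos (by omega : j + 1 ≤ 2 * n + 1)]
        intro ω (hω : M - ((j:ℝ) - 1) * δ ≤ ξ ω)
        have harg : M - (((j+1 : ℕ) : ℝ) - 1) * δ ≤ M - ((j:ℝ) - 1) * δ := by
          push_cast
          nlinarith [hδ.le]
        exact le_trans harg hω
      · by_cases h2 : j ≤ 2 * n + 1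
        · rw [if_pos h2, if_neg (by omega : ¬ j + 1 ≤ 2 * n + 1)]
          exact Set.subset_univ _
        · rw [if_neg h2, if_neg (by omega : ¬ j + 1 ≤ 2 * n + 1)]
  have hC0 : C 0 = ∅ := by rw [hCdef]; simp
  have hCk : C (2 * n + 2) = Set.univ := by
    rw [hCdef]
    simp only
    rw [if_neg (by omega), if_neg (by omega)]
  obtain ⟨Q, hQp, hQle, hQchain⟩ :=
    exists_core_measure μ hcap hconc hcont C (2 * n + 2) hCmeas hCmono hC0 hCk
  haveI := hQp
  obtain ⟨hint, hform, hgint, hgm1int, hgle, hg1H, hganti⟩ :=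
    core_facts hcap hconc hξ hξint Q hQp hQle
  -- grid equalities
  have hgrid : ∀ l : ℕ, l ≤ 2 * n →
      (Q {ω | ξ ω ≥ M - (l:ℝ) * δ}).toReal = μ {ω | ξ ω ≥ M - (l:ℝ) * δ} := by
    intro l hl
    have h := hQchain (l + 1) (by omega)
    have hCl : C (l + 1) = {ω | ξ ω ≥ M - (l:ℝ) * δ} := by
      rw [hCdef]
      simp only
      rw [if_neg (by omega), if_pos (by omega)]
      have : ((l + 1 : ℕ) : ℝ) - 1 = (l : ℝ) := by push_cast; ring
      rw [this]
    rwa [hCl] at h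
  -- global integrability facts
  have hGint := G_intOn hcap hξ hξint
  have hGm1int := Gm1_intOn hcap hconc hξ hξint
  have hGganti := G_anti hcap hξ
  have hGgIoi : IntegrableOn (fun t => μ {ω | ξ ω ≥ t} - (Q {ω | ξ ω ≥ t}).toReal)
      (Set.Ioi (0:ℝ)) volume := hGint.sub hgint
  have hGgIio : IntegrableOn (fun t => μ {ω | ξ ω ≥ t} - (Q {ω | ξ ω ≥ t}).toReal)
      (Set.Iio (0:ℝ)) volume := by
    have h := hGm1int.sub hgm1int
    exact h.congr (Filter.Eventually.of_forall (fun t => by simp only [Pi.sub_apply]; ring))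
  -- positive side
  have hpos : (∫ t in Set.Ioi (0:ℝ), μ {ω | ξ ω ≥ t})
      ≤ (∫ t in Set.Ioi (0:ℝ), (Q {ω | ξ ω ≥ t}).toReal) + 2 * ε := by
    have hsub : (∫ t in Set.Ioi (0:ℝ), μ {ω | ξ ω ≥ t})
        - (∫ t in Set.Ioi (0:ℝ), (Q {ω | ξ ω ≥ t}).toReal)
        = ∫ t in Set.Ioi (0:ℝ), (μ {ω | ξ ω ≥ t} - (Q {ω | ξ ω ≥ t}).toReal) :=
      (integral_sub hGint hgint).symm
    have hsplit : (∫ t in Set.Ioi (0:ℝ), (μ {ω | ξ ω ≥ t} - (Q {ω | ξ ω ≥ t}).toReal))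
        = (∫ t in Set.Ioc (0:ℝ) M, (μ {ω | ξ ω ≥ t} - (Q {ω | ξ ω ≥ t}).toReal))
          + ∫ t in Set.Ioi M, (μ {ω | ξ ω ≥ t} - (Q {ω | ξ ω ≥ t}).toReal) := by
      rw [← Set.Ioc_union_Ioi_eq_Ioi hM.le]
      exact setIntegral_union Set.Ioc_disjoint_Ioi_same measurableSet_Ioi
        (hGgIoi.mono_set Set.Ioc_subset_Ioi_self)
        (hGgIoi.mono_set (Set.Ioi_subset_Ioi hM.le))
    have hmid : (∫ t in Set.Ioc (0:ℝ) M, (μ {ω | ξ ω ≥ t} - (Q {ω | ξ ω ≥ t}).toReal)) ≤ ε := by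
      have hg : ∀ i : ℕ, i ≤ n → (Q {ω | ξ ω ≥ (0:ℝ) + (i:ℝ) * δ}).toReal
          = μ {ω | ξ ω ≥ (0:ℝ) + (i:ℝ) * δ} := by
        intro i hi
        have harg : (0:ℝ) + (i:ℝ) * δ = M - ((n - i : ℕ):ℝ) * δ := by
          rw [Nat.cast_sub hi, sub_mul, hnδ]
          ring
        rw [harg]
        exact hgrid (n - i) (by omega)
      have hrb := riemann_bound hGganti hganti hgle 0 δ hδ n hg
      rw [zero_add, hnδ] at hrb
      have hb : δ * (μ {ω | ξ ω ≥ (0:ℝ)} - μ {ω | ξ ω ≥ M}) ≤ ε := by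
        have h1 : μ {ω | ξ ω ≥ (0:ℝ)} - μ {ω | ξ ω ≥ M} ≤ 1 := by
          have := G_le_one hcap hξ 0
          have := G_nonneg hcap hξ M
          linarith
        nlinarith
      exact hrb.trans hb
    have htail : (∫ t in Set.Ioi M, (μ {ω | ξ ω ≥ t} - (Q {ω | ξ ω ≥ t}).toReal)) ≤ ε := by
      refine le_trans (setIntegral_mono_on (hGgIoi.mono_set (Set.Ioi_subset_Ioi hM.le))
        (hξint.mono_set (Set.Ioi_subset_Ioi hM.le)) measurableSet_Ioi ?_) hNtail
      intro t ht
      have h1 : (0:ℝ) ≤ (Q {ω | ξ ω ≥ t}).toReal := ENNReal.toReal_nonneg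
      have h2 := G_le_H hcap hξ (lt_trans hM (Set.mem_Ioi.mp ht))
      linarith
    linarith
  -- negative side
  have hneg : (∫ t in Set.Iio (0:ℝ), (μ {ω | ξ ω ≥ t} - 1))
      ≤ (∫ t in Set.Iio (0:ℝ), ((Q {ω | ξ ω ≥ t}).toReal - 1)) + 2 * ε := by
    have hsub : (∫ t in Set.Iio (0:ℝ), (μ {ω | ξ ω ≥ t} - 1))
        - (∫ t in Set.Iio (0:ℝ), ((Q {ω | ξ ω ≥ t}).toReal - 1))
        = ∫ t in Set.Iio (0:ℝ), (μ {ω | ξ ω ≥ t} - (Q {ω | ξ ω ≥ t}).toReal) := by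
      rw [← integral_sub hGm1int hgm1int]
      apply integral_congr_ae
      apply Filter.Eventually.of_forall
      intro t
      ring
    have hIic : (∫ t in Set.Iio (0:ℝ), (μ {ω | ξ ω ≥ t} - (Q {ω | ξ ω ≥ t}).toReal))
        = ∫ t in Set.Iic (0:ℝ), (μ {ω | ξ ω ≥ t} - (Q {ω | ξ ω ≥ t}).toReal) :=
      (MeasureTheory.integral_Iic_eq_integral_Iio).symm
    have hGgIic : IntegrableOn (fun t => μ {ω | ξ ω ≥ t} - (Q {ω | ξ ω ≥ t}).toReal)
        (Set.Iic (-M)) volume :=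
      hGgIio.mono_set (fun t ht =>
        Set.mem_Iio.mpr (lt_of_le_of_lt (Set.mem_Iic.mp ht) (by linarith)))
    have hsplit : (∫ t in Set.Iic (0:ℝ), (μ {ω | ξ ω ≥ t} - (Q {ω | ξ ω ≥ t}).toReal))
        = (∫ t in Set.Iic (-M), (μ {ω | ξ ω ≥ t} - (Q {ω | ξ ω ≥ t}).toReal))
          + ∫ t in Set.Ioc (-M) (0:ℝ), (μ {ω | ξ ω ≥ t} - (Q {ω | ξ ω ≥ t}).toReal) := by
      rw [← Set.Iic_union_Ioc_eq_Iic (by linarith : -M ≤ (0:ℝ))]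
      exact setIntegral_union (Set.Iic_disjoint_Ioc (le_refl (-M))) measurableSet_Ioc
        hGgIic ((antitone_integrableOn_Ioc hGganti _ _).sub (antitone_integrableOn_Ioc hganti _ _))
    have hHrefl : IntegrableOn (fun t : ℝ => μ {ω | |ξ ω| ≥ -t}) (Set.Iic (-M)) volume := by
      have h1 : IntegrableOn (fun t => μ {ω | |ξ ω| ≥ t}) (Set.Ici M) volume :=
        (integrableOn_Ici_iff_integrableOn_Ioi (by finiteness)).mpr (hξint.mono_set (Set.Ioi_subset_Ioi hM.le))
      have h2 := integrableOn_comp_neg measurableSet_Ici h1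
      have hpre : (fun t : ℝ => -t) ⁻¹' (Set.Ici M) = Set.Iic (-M) := by
        ext x; simp only [Set.mem_preimage, Set.mem_Ici, Set.mem_Iic]; constructor <;>
          (intro h; linarith)
      rwa [hpre] at h2
    have htail : (∫ t in Set.Iic (-M), (μ {ω | ξ ω ≥ t} - (Q {ω | ξ ω ≥ t}).toReal)) ≤ ε := by
      have hmono : (∫ t in Set.Iic (-M), (μ {ω | ξ ω ≥ t} - (Q {ω | ξ ω ≥ t}).toReal))
          ≤ ∫ t in Set.Iic (-M), μ {ω | |ξ ω| ≥ -t} := by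
        apply setIntegral_mono_on hGgIic hHrefl measurableSet_Iic
        intro t ht
        have ht' : t < 0 := lt_of_le_of_lt (Set.mem_Iic.mp ht) (by linarith)
        have h1 := hg1H t ht'
        have h2 := G_le_one hcap hξ t
        linarith
      have hrefl : (∫ t in Set.Iic (-M), μ {ω | |ξ ω| ≥ -t})
          = ∫ t in Set.Ioi M, μ {ω | |ξ ω| ≥ t} := by
        have h := integral_comp_neg_Ioi M (fun t : ℝ => μ {ω | |ξ ω| ≥ -t})
        simp only [neg_neg] at h
        rw [← h]
      rw [hrefl] at hmono
      exact hmono.trans hNtail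
    have hmid : (∫ t in Set.Ioc (-M) (0:ℝ), (μ {ω | ξ ω ≥ t} - (Q {ω | ξ ω ≥ t}).toReal)) ≤ ε := by
      have hg : ∀ i : ℕ, i ≤ n → (Q {ω | ξ ω ≥ (-M) + (i:ℝ) * δ}).toReal
          = μ {ω | ξ ω ≥ (-M) + (i:ℝ) * δ} := by
        intro i hi
        have harg : (-M) + (i:ℝ) * δ = M - ((2 * n - i : ℕ):ℝ) * δ := by
          rw [Nat.cast_sub (by omega : i ≤ 2 * n), sub_mul]
          push_cast
          nlinarith [hnδ]
        rw [harg]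
        exact hgrid (2 * n - i) (by omega)
      have hrb := riemann_bound hGganti hganti hgle (-M) δ hδ n hg
      have h0 : (-M) + (n:ℝ) * δ = 0 := by rw [hnδ]; ring
      rw [h0] at hrb
      have hb : δ * (μ {ω | ξ ω ≥ (-M)} - μ {ω | ξ ω ≥ (0:ℝ)}) ≤ ε := by
        have h1 : μ {ω | ξ ω ≥ (-M)} - μ {ω | ξ ω ≥ (0:ℝ)} ≤ 1 := by
          have := G_le_one hcap hξ (-M)
          have := G_nonneg hcap hξ 0
          linarith
        nlinarith
      exact hrb.trans hb
    linarith
  refine ⟨Q, hQp, hQle, ?_⟩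
  rw [choquet, hform]
  linarith

end Stmt3Aux

namespace Stmt3Aux

set_option linter.unusedSectionVars false
set_option linter.unusedVariables false

open MeasureTheory

variable {Ω : Type*} [MeasurableSpace Ω]

lemma contBelow {μ : Set Ω → ℝ} (hcap : IsCapacity μ)
    (hconc : ∀ A B : Set Ω, MeasurableSet A → MeasurableSet B →
      μ (A ∪ B) + μ (A ∩ B) ≤ μ A + μ B)
    (hcont : ContAtEmpty μ) : ContBelow μ := by
  intro A hA hmono
  have hU : MeasurableSet (⋃ n, A n) := MeasurableSet.iUnion hA
  have hdiffmeas : ∀ n, MeasurableSet ((⋃ i, A i) \ A n) := fun n => hU.diff (hA n)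
  have htail : Filter.Tendsto (fun n => μ ((⋃ i, A i) \ A n)) Filter.atTop (nhds 0) := by
    apply hcont _ hdiffmeas
    · intro a b hab
      exact Set.diff_subset_diff_right (hmono hab)
    · apply Set.eq_empty_of_subset_empty
      intro ω hω
      have h1 := Set.mem_iInter.mp hω 0
      obtain ⟨i, hi⟩ := Set.mem_iUnion.mp h1.1
      exact (Set.mem_iInter.mp hω i).2 hi
  have hub : ∀ n, μ (A n) ≤ μ (⋃ i, A i) :=
    fun n => hcap.2.2 _ _ (hA n) hU (Set.subset_iUnion A n)
  have hlb : ∀ n, μ (⋃ i, A i) - μ ((⋃ i, A i) \ A n) ≤ μ (A n) := by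
    intro n
    have key := hconc (A n) ((⋃ i, A i) \ A n) (hA n) (hdiffmeas n)
    have h1 : A n ∪ ((⋃ i, A i) \ A n) = ⋃ i, A i :=
      Set.union_diff_cancel (Set.subset_iUnion A n)
    have h2 : A n ∩ ((⋃ i, A i) \ A n) = ∅ := by
      apply Set.eq_empty_of_subset_empty
      rintro ω ⟨h3, h4⟩
      exact h4.2 h3
    rw [h1, h2, hcap.1, add_zero] at key
    linarith
  apply tendsto_of_tendsto_of_tendsto_of_le_of_le (g := fun n =>
    μ (⋃ i, A i) - μ ((⋃ i, A i) \ A n)) (h := fun _ => μ (⋃ i, A i))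
  · simpa using (tendsto_const_nhds (x := μ (⋃ i, A i))).sub htail
  · exact tendsto_const_nhds
  · exact hlb
  · exact hub

lemma contAbove {μ : Set Ω → ℝ} (hcap : IsCapacity μ)
    (hconc : ∀ A B : Set Ω, MeasurableSet A → MeasurableSet B →
      μ (A ∪ B) + μ (A ∩ B) ≤ μ A + μ B)
    (hcont : ContAtEmpty μ) : ContAbove μ := by
  intro A hA hanti
  have hI : MeasurableSet (⋂ n, A n) := MeasurableSet.iInter hA
  have hdiffmeas : ∀ n, MeasurableSet (A n \ ⋂ i, A i) := fun n => (hA n).diff hI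
  have htail : Filter.Tendsto (fun n => μ (A n \ ⋂ i, A i)) Filter.atTop (nhds 0) := by
    apply hcont _ hdiffmeas
    · intro a b hab
      exact Set.diff_subset_diff_left (hanti hab)
    · apply Set.eq_empty_of_subset_empty
      intro ω hω
      have h1 := Set.mem_iInter.mp hω 0
      apply h1.2
      apply Set.mem_iInter.mpr
      intro i
      exact (Set.mem_iInter.mp hω i).1
  have hlb : ∀ n, μ (⋂ i, A i) ≤ μ (A n) :=
    fun n => hcap.2.2 _ _ hI (hA n) (Set.iInter_subset A n)
  have hub : ∀ n, μ (A n) ≤ μ (⋂ i, A i) + μ (A n \ ⋂ i, A i) := by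
    intro n
    have key := hconc (⋂ i, A i) (A n \ ⋂ i, A i) hI (hdiffmeas n)
    have h1 : (⋂ i, A i) ∪ (A n \ ⋂ i, A i) = A n :=
      Set.union_diff_cancel (Set.iInter_subset A n)
    have h2 : (⋂ i, A i) ∩ (A n \ ⋂ i, A i) = ∅ := by
      apply Set.eq_empty_of_subset_empty
      rintro ω ⟨h3, h4⟩
      exact h4.2 h3
    rw [h1, h2, hcap.1, add_zero] at key
    linarith
  apply tendsto_of_tendsto_of_tendsto_of_le_of_le (g := fun _ => μ (⋂ i, A i))
    (h := fun n => μ (⋂ i, A i) + μ (A n \ ⋂ i, A i))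
  · exact tendsto_const_nhds
  · simpa using (tendsto_const_nhds (x := μ (⋂ i, A i))).add htail
  · exact hlb
  · exact hub

end Stmt3Aux


open Stmt3Aux in
theorem stmt3 {Ω : Type*} [MeasurableSpace Ω]
    (μ : Set Ω → ℝ) (hcap : IsCapacity μ)
    (hconc : ∀ A B : Set Ω, MeasurableSet A → MeasurableSet B →
      μ (A ∪ B) + μ (A ∩ B) ≤ μ A + μ B)
    (hcont : ContAtEmpty μ) :
    (∃ 𝒮 : Set (Measure Ω), 𝒮.Nonempty ∧ (∀ P ∈ 𝒮, IsProbabilityMeasure P) ∧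
      (∀ A : Set Ω, MeasurableSet A →
        μ A = sSup ((fun P : Measure Ω => (P A).toReal) '' 𝒮)) ∧
      (∀ ξ : Ω → ℝ, Measurable ξ →
        MeasureTheory.IntegrableOn (fun t => μ {ω | |ξ ω| ≥ t}) (Set.Ioi (0:ℝ)) →
        choquet μ ξ = sSup ((fun P : Measure Ω => ∫ ω, ξ ω ∂P) '' 𝒮))) ∧
    (ContBelow μ ∧ ContAbove μ) := by
  classical
  refine ⟨?_, contBelow hcap hconc hcont, contAbove hcap hconc hcont⟩
  set 𝒮 : Set (Measure Ω) := {Q : Measure Ω | IsProbabilityMeasure Q ∧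
    ∀ A : Set Ω, MeasurableSet A → (Q A).toReal ≤ μ A} with h𝒮
  -- a measure attaining μ A for a given measurable A
  have hattain : ∀ A : Set Ω, MeasurableSet A →
      ∃ Q ∈ 𝒮, (Q A).toReal = μ A := by
    intro A hA
    set C : ℕ → Set Ω := fun j => if j = 0 then ∅ else if j = 1 then A else Set.univ with hC
    have hCmeas : ∀ j, MeasurableSet (C j) := by
      intro j
      rw [hC]
      simp only
      split
      · exact MeasurableSet.empty
      · split
        · exact hA
        · exact MeasurableSet.univ
    have hCmono : Monotone C := by
      apply monotone_nat_of_le_succ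
      intro j
      rw [hC]
      simp only
      by_cases h0 : j = 0
      · rw [if_pos h0]
        exact Set.empty_subset _
      · rw [if_neg h0, if_neg (by omega : ¬ j + 1 = 0)]
        by_cases h1 : j = 1
        · rw [if_pos h1, if_neg (by omega : ¬ j + 1 = 1)]
          exact Set.subset_univ _
        · rw [if_neg h1, if_neg (by omega : ¬ j + 1 = 1)]
    obtain ⟨Q, hQp, hQle, hQchain⟩ := exists_core_measure μ hcap hconc hcont C 2
      hCmeas hCmono (by rw [hC]; simp) (by rw [hC]; simp)
    refine ⟨Q, ⟨hQp, hQle⟩, ?_⟩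
    have := hQchain 1 (by omega)
    have hC1 : C 1 = A := by rw [hC]; simp
    rwa [hC1] at this
  obtain ⟨Q₀, hQ₀, _⟩ := hattain ∅ MeasurableSet.empty
  have hne : 𝒮.Nonempty := ⟨Q₀, hQ₀⟩
  refine ⟨𝒮, hne, fun P hP => hP.1, ?_, ?_⟩
  · -- the set representation
    intro A hA
    obtain ⟨Q, hQ, hQA⟩ := hattain A hA
    apply le_antisymm
    · exact le_csSup ⟨μ A, by rintro x ⟨P, hP, rfl⟩; exact hP.2 A hA⟩ ⟨Q, hQ, hQA⟩
    · exact csSup_le (hne.image _) (by rintro x ⟨P, hP, rfl⟩; exact hP.2 A hA)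
  · -- the Choquet representation
    intro ξ hξ hξint
    have hub : ∀ x ∈ (fun P : Measure Ω => ∫ ω, ξ ω ∂P) '' 𝒮, x ≤ choquet μ ξ := by
      rintro x ⟨Q, hQ, rfl⟩
      obtain ⟨hint, hform, hgint, hgm1int, hgle, hg1H, hganti⟩ :=
        core_facts hcap hconc hξ hξint Q hQ.1 hQ.2
      show (∫ ω, ξ ω ∂Q) ≤ choquet μ ξ
      rw [hform, choquet]
      have h1 : (∫ t in Set.Ioi (0:ℝ), (Q {ω | ξ ω ≥ t}).toReal)
          ≤ ∫ t in Set.Ioi (0:ℝ), μ {ω | ξ ω ≥ t} :=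
        setIntegral_mono_on hgint (G_intOn hcap hξ hξint) measurableSet_Ioi
          (fun t _ => hgle t)
      have h2 : (∫ t in Set.Iio (0:ℝ), ((Q {ω | ξ ω ≥ t}).toReal - 1))
          ≤ ∫ t in Set.Iio (0:ℝ), (μ {ω | ξ ω ≥ t} - 1) :=
        setIntegral_mono_on hgm1int (Gm1_intOn hcap hconc hξ hξint) measurableSet_Iio
          (fun t _ => by have := hgle t; linarith)
      linarith
    have hbdd : BddAbove ((fun P : Measure Ω => ∫ ω, ξ ω ∂P) '' 𝒮) :=
      ⟨choquet μ ξ, hub⟩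
    apply le_antisymm
    · -- choquet ≤ sSup
      apply le_of_forall_pos_le_add
      intro ε hε
      obtain ⟨Q, hQp, hQle, hQbound⟩ := choquet_eps hcap hconc hcont hξ hξint
        (show (0:ℝ) < ε / 4 by linarith)
      have hmem : (∫ ω, ξ ω ∂Q) ∈ (fun P : Measure Ω => ∫ ω, ξ ω ∂P) '' 𝒮 :=
        ⟨Q, ⟨hQp, hQle⟩, rfl⟩
      have := le_csSup hbdd hmem
      calc choquet μ ξ ≤ (∫ ω, ξ ω ∂Q) + 4 * (ε / 4) := hQbound
        _ ≤ sSup ((fun P : Measure Ω => ∫ ω, ξ ω ∂P) '' 𝒮) + ε := by linarith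
    · exact csSup_le (hne.image _) hub
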